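/- The rational cubic/linear interpolation kernel S_{3/1} with parameter a > -1 is continuously differentiable on ℝ; in particular its left and right derivatives agree at t = 0, t = 1, and t = 2, and its derivative at t = 1 equals -1 for every admissible a. -/

import Mathlib

open Set Filter

noncomputable def S31 (a t : ℝ) : ℝ :=
  if |t| < 1 then (1 - |t|) * (1 + (1 + a) * |t| - t ^ 2) / (1 + a * |t|)
  else if |t| < 2 then (1 - |t|) * (2 - |t|) ^ 2 / (1 - a + a * |t|)
  else 0

noncomputable def D31 (a t : ℝ) : ℝ :=
  if |t| < 1 then t * (-(4 + 2*a) + (3 - 2*a - a^2) * |t| + 2*a*t^2) / (1 + a*|t|)^2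
  else if |t| < 2 then
    ((-8 + 10*|t| - 3*t^2) * (1 - a + a*|t|) - a * ((1 - |t|) * (2 - |t|)^2)) / (1 - a + a*|t|)^2
      * (if t < 0 then -1 else 1)
  else 0

lemma den1_pos {a : ℝ} (ha : -1 < a) {u : ℝ} (h0 : 0 ≤ u) (h1 : u ≤ 1) : 0 < 1 + a * u := by
  rcases le_or_gt 0 a with h | h
  · nlinarith [mul_nonneg h h0]
  · nlinarith [mul_le_mul_of_nonpos_left h1 h.le]

lemma den2_pos {a : ℝ} (ha : -1 < a) {u : ℝ} (h1 : 1 ≤ u) (h2 : u ≤ 2) : 0 < 1 - a + a * u := by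
  rcases le_or_gt 0 a with h | h
  · nlinarith [mul_nonneg h (by linarith : (0:ℝ) ≤ u - 1)]
  · nlinarith [mul_le_mul_of_nonpos_left (show u - 1 ≤ 1 by linarith) h.le]

lemma S31_even (a t : ℝ) : S31 a (-t) = S31 a t := by
  simp [S31, abs_neg, neg_sq]

lemma D31_odd (a t : ℝ) : D31 a (-t) = -D31 a t := by
  unfold D31
  rw [abs_neg, neg_sq]
  by_cases h1 : |t| < 1
  · rw [if_pos h1, if_pos h1]; ring
  · rw [if_neg h1, if_neg h1]
    by_cases h2 : |t| < 2
    · rw [if_pos h2, if_pos h2]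
      have ht : t ≠ 0 := by
        intro h; rw [h] at h1; simp at h1
      rcases lt_or_gt_of_ne ht with h | h
      · rw [if_pos h, if_neg (by linarith : ¬ -t < 0)]; ring
      · rw [if_neg (by linarith : ¬ t < 0), if_pos (by linarith : -t < 0)]; ring
    · rw [if_neg h2, if_neg h2]; ring

lemma S31_eq_f1 (a : ℝ) {x : ℝ} (h0 : 0 ≤ x) (h1 : x < 1) :
    S31 a x = (1 - x) * (1 + (1 + a) * x - x ^ 2) / (1 + a * x) := by
  unfold S31
  rw [abs_of_nonneg h0, if_pos h1]

lemma S31_eq_f2 (a : ℝ) {x : ℝ} (h1 : 1 ≤ x) (h2 : x < 2) :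
    S31 a x = (1 - x) * (2 - x) ^ 2 / (1 - a + a * x) := by
  unfold S31
  rw [abs_of_nonneg (by linarith : (0:ℝ) ≤ x), if_neg (not_lt.2 h1), if_pos h2]

lemma S31_eq_zero (a : ℝ) {x : ℝ} (h2 : 2 ≤ x) : S31 a x = 0 := by
  unfold S31
  rw [abs_of_nonneg (by linarith : (0:ℝ) ≤ x), if_neg (not_lt.2 (by linarith)),
    if_neg (not_lt.2 h2)]

lemma S31_zero (a : ℝ) : S31 a 0 = 1 := by norm_num [S31]

lemma S31_one (a : ℝ) : S31 a 1 = 0 := by norm_num [S31]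

lemma D31_one {a : ℝ} (ha : -1 < a) : D31 a 1 = -1 := by norm_num [D31]

lemma D31_two {a : ℝ} (ha : -1 < a) : D31 a 2 = 0 := by norm_num [D31]

-- derivative of the first model function
lemma f1_hasDerivAt (a : ℝ) {t : ℝ} (hden : 1 + a * t ≠ 0) :
    HasDerivAt (fun x : ℝ => (1 - x) * (1 + (1 + a) * x - x ^ 2) / (1 + a * x))
      ((((-1) * (1 + (1 + a) * t - t ^ 2) + (1 - t) * ((1 + a) - 2 * t)) * (1 + a * t)
        - (1 - t) * (1 + (1 + a) * t - t ^ 2) * a) / (1 + a * t) ^ 2) t := by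
  have h1 : HasDerivAt (fun x : ℝ => 1 - x) (-1) t := by
    simpa using (hasDerivAt_id t).const_sub 1
  have h2 : HasDerivAt (fun x : ℝ => 1 + (1 + a) * x - x ^ 2) ((1 + a) - 2 * t) t := by
    have hb : HasDerivAt (fun x : ℝ => 1 + (1 + a) * x) (1 + a) t := by
      simpa using ((hasDerivAt_id t).const_mul (1 + a)).const_add 1
    simpa using hb.fun_sub (hasDerivAt_pow 2 t)
  have h3 : HasDerivAt (fun x : ℝ => 1 + a * x) a t := by
    simpa using ((hasDerivAt_id t).const_mul a).const_add 1
  exact (h1.mul h2).div h3 hden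

-- derivative of the second model function
lemma f2_hasDerivAt (a : ℝ) {t : ℝ} (hden : 1 - a + a * t ≠ 0) :
    HasDerivAt (fun x : ℝ => (1 - x) * (2 - x) ^ 2 / (1 - a + a * x))
      ((((-1) * (2 - t) ^ 2 + (1 - t) * (2 * (2 - t) * (-1))) * (1 - a + a * t)
        - (1 - t) * (2 - t) ^ 2 * a) / (1 - a + a * t) ^ 2) t := by
  have h1 : HasDerivAt (fun x : ℝ => 1 - x) (-1) t := by
    simpa using (hasDerivAt_id t).const_sub 1
  have h0 : HasDerivAt (fun x : ℝ => 2 - x) (-1) t := by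
    simpa using (hasDerivAt_id t).const_sub 2
  have h2 : HasDerivAt (fun x : ℝ => (2 - x) ^ 2) (2 * (2 - t) * (-1)) t := by
    simpa using h0.fun_pow 2
  have h3 : HasDerivAt (fun x : ℝ => 1 - a + a * x) a t := by
    simpa using ((hasDerivAt_id t).const_mul a).const_add (1 - a)
  exact (h1.mul h2).div h3 hden

lemma slope0_eq {a x u : ℝ} (hx : x ≠ 0) (hD : 1 + a * u ≠ 0) (hu2 : u ^ 2 = x ^ 2) :
    -(x * (2 + a - u)) / (1 + a * u) = ((1 - u) * (1 + (1 + a) * u - x ^ 2) / (1 + a * u) - 1) / x := by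
  field_simp
  linear_combination (1 + a) * (1 + a * u) * hu2 - a * u * (1 + a) * hu2

lemma S31_hasDerivAt {a : ℝ} (ha : -1 < a) (t : ℝ) : HasDerivAt (S31 a) (D31 a t) t := by
  have ha' : (0:ℝ) < 1 + a := by linarith
  suffices h : ∀ s : ℝ, 0 ≤ s → HasDerivAt (S31 a) (D31 a s) s by
    rcases le_or_gt 0 t with ht | ht
    · exact h t ht
    · have h2 := h (-t) (by linarith)
      have h3 : HasDerivAt (fun x : ℝ => S31 a (-x)) (D31 a (-t) * (-1)) t :=
        h2.comp t (by simpa using hasDerivAt_neg t)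
      have h4 : (fun x : ℝ => S31 a (-x)) = S31 a := funext fun x => S31_even a x
      rw [h4, D31_odd] at h3
      simpa using h3
  intro s hs
  rcases eq_or_lt_of_le hs with h0 | h0
  · -- s = 0
    subst h0
    have hD0 : D31 a 0 = 0 := by norm_num [D31]
    rw [hD0, hasDerivAt_iff_tendsto_slope]
    have hcont : ContinuousAt (fun x : ℝ => -(x * (2 + a - |x|)) / (1 + a * |x|)) 0 :=
      ContinuousAt.div (by fun_prop) (by fun_prop) (by norm_num)
    have h0' : -((0:ℝ) * (2 + a - |(0:ℝ)|)) / (1 + a * |(0:ℝ)|) = 0 := by norm_num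
    have htend : Tendsto (fun x : ℝ => -(x * (2 + a - |x|)) / (1 + a * |x|)) (nhds 0) (nhds 0) := by
      simpa [h0'] using hcont.tendsto
    refine Tendsto.congr' ?_ (htend.mono_left nhdsWithin_le_nhds)
    filter_upwards [mem_nhdsWithin_of_mem_nhds
      (isOpen_Ioo.mem_nhds (show (0:ℝ) ∈ Ioo (-1) 1 by norm_num)),
      eventually_mem_nhdsWithin] with x hx hne
    have hxne : x ≠ 0 := hne
    have hax : |x| < 1 := abs_lt.2 ⟨hx.1, hx.2⟩
    have hden : (0:ℝ) < 1 + a * |x| := den1_pos ha (abs_nonneg x) hax.le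
    have hS : S31 a x = (1 - |x|) * (1 + (1 + a) * |x| - x ^ 2) / (1 + a * |x|) := by
      unfold S31; rw [if_pos hax]
    rw [slope_def_field, S31_zero, hS, sub_zero]
    exact slope0_eq hxne hden.ne' (sq_abs x)
  rcases lt_trichotomy s 1 with h1 | h1 | h1
  · -- 0 < s < 1
    have hden : (0:ℝ) < 1 + a * s := den1_pos ha hs h1.le
    have hg := f1_hasDerivAt a hden.ne'
    have hEq : (fun x : ℝ => (1 - x) * (1 + (1 + a) * x - x ^ 2) / (1 + a * x)) =ᶠ[nhds s] S31 a := by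
      filter_upwards [isOpen_Ioo.mem_nhds (show s ∈ Ioo (0:ℝ) 1 from ⟨h0, h1⟩)] with x hx
      exact (S31_eq_f1 a hx.1.le hx.2).symm
    have hD : HasDerivAt (S31 a) _ s := hg.congr_of_eventuallyEq hEq.symm
    convert hD using 1
    unfold D31
    rw [abs_of_nonneg hs, if_pos h1]
    field_simp
    ring
  · -- s = 1
    subst h1
    rw [D31_one ha, hasDerivAt_iff_tendsto_slope, ← nhdsLT_sup_nhdsGT (1:ℝ),
      tendsto_sup]
    constructor
    · -- left
      have hne : (1:ℝ) + a * 1 ≠ 0 := by norm_num; linarith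
      have hcont : ContinuousAt (fun x : ℝ => -(1 + (1 + a) * x - x ^ 2) / (1 + a * x)) 1 :=
        ContinuousAt.div (by fun_prop) (by fun_prop) hne
      have hval : -(1 + (1 + a) * 1 - (1:ℝ) ^ 2) / (1 + a * 1) = -1 := by
        rw [div_eq_iff hne]; ring
      have htend : Tendsto (fun x : ℝ => -(1 + (1 + a) * x - x ^ 2) / (1 + a * x))
          (nhds 1) (nhds (-1)) := by
        rw [← hval]; exact hcont.tendsto
      refine Tendsto.congr' ?_ (htend.mono_left nhdsWithin_le_nhds)
      filter_upwards [Ioo_mem_nhdsLT_of_mem (show (1:ℝ) ∈ Ioc 0 1 by norm_num)] with x hx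
      have hden : (0:ℝ) < 1 + a * x := den1_pos ha hx.1.le hx.2.le
      have hx1 : x - 1 ≠ 0 := by nlinarith [hx.2]
      rw [slope_def_field, S31_one, S31_eq_f1 a hx.1.le hx.2, sub_zero]
      field_simp
      ring
    · -- right
      have hne : (1:ℝ) - a + a * 1 ≠ 0 := by norm_num
      have hcont : ContinuousAt (fun x : ℝ => -(2 - x) ^ 2 / (1 - a + a * x)) 1 :=
        ContinuousAt.div (by fun_prop) (by fun_prop) hne
      have hval : -((2:ℝ) - 1) ^ 2 / (1 - a + a * 1) = -1 := by
        rw [div_eq_iff hne]; ring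
      have htend : Tendsto (fun x : ℝ => -(2 - x) ^ 2 / (1 - a + a * x))
          (nhds 1) (nhds (-1)) := by
        rw [← hval]; exact hcont.tendsto
      refine Tendsto.congr' ?_ (htend.mono_left nhdsWithin_le_nhds)
      filter_upwards [Ioo_mem_nhdsGT_of_mem (show (1:ℝ) ∈ Ico 1 2 by norm_num)] with x hx
      have hden : (0:ℝ) < 1 - a + a * x := den2_pos ha hx.1.le hx.2.le
      have hx1 : x - 1 ≠ 0 := by nlinarith [hx.1]
      rw [slope_def_field, S31_one, S31_eq_f2 a hx.1.le hx.2, sub_zero]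
      field_simp
      ring
  rcases lt_trichotomy s 2 with h2 | h2 | h2
  · -- 1 < s < 2
    have hden : (0:ℝ) < 1 - a + a * s := den2_pos ha h1.le h2.le
    have hg := f2_hasDerivAt a hden.ne'
    have hEq : (fun x : ℝ => (1 - x) * (2 - x) ^ 2 / (1 - a + a * x)) =ᶠ[nhds s] S31 a := by
      filter_upwards [isOpen_Ioo.mem_nhds (show s ∈ Ioo (1:ℝ) 2 from ⟨h1, h2⟩)] with x hx
      exact (S31_eq_f2 a hx.1.le hx.2).symm
    have hD : HasDerivAt (S31 a) _ s := hg.congr_of_eventuallyEq hEq.symm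
    convert hD using 1
    unfold D31
    rw [abs_of_nonneg hs, if_neg (not_lt.2 h1.le), if_pos h2, if_neg (not_lt.2 (by linarith))]
    field_simp
    ring
  · -- s = 2
    subst h2
    rw [D31_two ha, hasDerivAt_iff_tendsto_slope, ← nhdsLT_sup_nhdsGT (2:ℝ),
      tendsto_sup]
    constructor
    · -- left
      have hne : (1:ℝ) - a + a * 2 ≠ 0 := by norm_num; linarith
      have hcont : ContinuousAt (fun x : ℝ => -((1 - x) * (2 - x)) / (1 - a + a * x)) 2 :=
        ContinuousAt.div (by fun_prop) (by fun_prop) hne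
      have hval : -(((1:ℝ) - 2) * (2 - 2)) / (1 - a + a * 2) = 0 := by
        rw [div_eq_iff hne]; ring
      have htend : Tendsto (fun x : ℝ => -((1 - x) * (2 - x)) / (1 - a + a * x))
          (nhds 2) (nhds 0) := by
        rw [← hval]; exact hcont.tendsto
      refine Tendsto.congr' ?_ (htend.mono_left nhdsWithin_le_nhds)
      filter_upwards [Ioo_mem_nhdsLT_of_mem (show (2:ℝ) ∈ Ioc 1 2 by norm_num)] with x hx
      have hden : (0:ℝ) < 1 - a + a * x := den2_pos ha hx.1.le hx.2.le
      have hx2 : x - 2 ≠ 0 := by nlinarith [hx.2]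
      rw [slope_def_field, S31_eq_zero a (le_refl 2), S31_eq_f2 a hx.1.le hx.2, sub_zero]
      field_simp
      ring
    · -- right
      refine Tendsto.congr' ?_ (tendsto_const_nhds : Tendsto (fun _ : ℝ => (0:ℝ)) _ _)
      filter_upwards [self_mem_nhdsWithin] with x hx
      have hx2 : (2:ℝ) < x := hx
      rw [slope_def_field, S31_eq_zero a (le_refl 2), S31_eq_zero a hx2.le, sub_zero,
        zero_div]
  · -- 2 < s
    have hEq : (fun _ : ℝ => (0:ℝ)) =ᶠ[nhds s] S31 a := by
      filter_upwards [isOpen_Ioi.mem_nhds (show s ∈ Ioi (2:ℝ) from h2)] with x hx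
      exact (S31_eq_zero a (le_of_lt hx)).symm
    have hD : HasDerivAt (S31 a) 0 s := (hasDerivAt_const s 0).congr_of_eventuallyEq hEq.symm
    convert hD using 1
    unfold D31
    rw [abs_of_nonneg hs, if_neg (not_lt.2 (by linarith)), if_neg (not_lt.2 h2.le)]

lemma D31_eq_e1 (a : ℝ) {x : ℝ} (h : |x| < 1) :
    D31 a x = x * (-(4 + 2*a) + (3 - 2*a - a^2) * |x| + 2*a*x^2) / (1 + a*|x|)^2 := by
  unfold D31; rw [if_pos h]

lemma D31_eq_e2 (a : ℝ) {x : ℝ} (h1 : 1 ≤ x) (h2 : x < 2) :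
    D31 a x = ((-8 + 10*|x| - 3*x^2) * (1 - a + a*|x|) - a * ((1 - |x|) * (2 - |x|)^2))
      / (1 - a + a*|x|)^2 := by
  have hx : |x| = x := abs_of_nonneg (by linarith)
  unfold D31
  rw [hx, if_neg (not_lt.2 h1), if_pos h2, if_neg (not_lt.2 (by linarith : (0:ℝ) ≤ x)), mul_one]

lemma D31_eq_zero (a : ℝ) {x : ℝ} (h : 2 ≤ x) : D31 a x = 0 := by
  have hx : |x| = x := abs_of_nonneg (by linarith)
  unfold D31
  rw [hx, if_neg (not_lt.2 (by linarith)), if_neg (not_lt.2 h)]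

lemma D31_continuous {a : ℝ} (ha : -1 < a) : Continuous (D31 a) := by
  have ha' : (0:ℝ) < 1 + a := by linarith
  rw [continuous_iff_continuousAt]
  suffices h : ∀ s : ℝ, 0 ≤ s → ContinuousAt (D31 a) s by
    intro t
    rcases le_or_gt 0 t with ht | ht
    · exact h t ht
    · have h2 : ContinuousAt (fun x : ℝ => -D31 a (-x)) t := by
        exact ((h (-t) (by linarith)).comp (continuous_neg.continuousAt)).neg
      have h4 : (fun x : ℝ => -D31 a (-x)) = D31 a := by
        funext x
        rw [D31_odd, neg_neg]
      rwa [h4] at h2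
  intro s hs
  -- continuity of the two model pieces
  have ce1 : ∀ x : ℝ, |x| ≤ 1 →
      ContinuousAt (fun y : ℝ => y * (-(4 + 2*a) + (3 - 2*a - a^2) * |y| + 2*a*y^2) / (1 + a*|y|)^2) x := by
    intro x hx
    exact ContinuousAt.div (by fun_prop) (by fun_prop)
      (pow_ne_zero 2 (den1_pos ha (abs_nonneg x) hx).ne')
  have ce2 : ∀ x : ℝ, 1 ≤ |x| → |x| ≤ 2 →
      ContinuousAt (fun y : ℝ => ((-8 + 10*|y| - 3*y^2) * (1 - a + a*|y|) - a * ((1 - |y|) * (2 - |y|)^2))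
        / (1 - a + a*|y|)^2) x := by
    intro x hx1 hx2
    exact ContinuousAt.div (by fun_prop) (by fun_prop)
      (pow_ne_zero 2 (den2_pos ha hx1 hx2).ne')
  rcases lt_trichotomy s 1 with h1 | h1 | h1
  · -- 0 ≤ s < 1
    refine (ce1 s (by rw [abs_of_nonneg hs]; exact h1.le)).congr ?_
    filter_upwards [isOpen_Ioo.mem_nhds (show s ∈ Ioo (-1:ℝ) 1 by constructor <;> [linarith; exact h1])] with x hx
    exact (D31_eq_e1 a (abs_lt.2 ⟨hx.1, hx.2⟩)).symm
  · -- s = 1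
    subst h1
    rw [← continuousWithinAt_compl_self]
    have hD1 : D31 a 1 = -1 := D31_one ha
    show Tendsto (D31 a) _ _
    rw [hD1, ← nhdsLT_sup_nhdsGT (1:ℝ), tendsto_sup]
    constructor
    · -- from the left: use e1
      have hval : (1:ℝ) * (-(4 + 2*a) + (3 - 2*a - a^2) * |(1:ℝ)| + 2*a*(1:ℝ)^2) / (1 + a*|(1:ℝ)|)^2 = -1 := by
        rw [abs_one, div_eq_iff (pow_ne_zero 2 (by linarith : (1:ℝ) + a * 1 ≠ 0))]
        ring
      have htend : Tendsto (fun y : ℝ => y * (-(4 + 2*a) + (3 - 2*a - a^2) * |y| + 2*a*y^2) / (1 + a*|y|)^2)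
          (nhds 1) (nhds (-1)) := by
        rw [← hval]; exact (ce1 1 (by norm_num)).tendsto
      refine Tendsto.congr' ?_ (htend.mono_left nhdsWithin_le_nhds)
      filter_upwards [Ioo_mem_nhdsLT_of_mem (show (1:ℝ) ∈ Ioc 0 1 by norm_num)] with x hx
      exact (D31_eq_e1 a (abs_lt.2 ⟨by linarith [hx.1], hx.2⟩)).symm
    · -- from the right: use e2
      have hval : ((-8 + 10*|(1:ℝ)| - 3*(1:ℝ)^2) * (1 - a + a*|(1:ℝ)|) - a * ((1 - |(1:ℝ)|) * (2 - |(1:ℝ)|)^2))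
          / (1 - a + a*|(1:ℝ)|)^2 = -1 := by
        rw [abs_one]; norm_num
      have htend : Tendsto (fun y : ℝ => ((-8 + 10*|y| - 3*y^2) * (1 - a + a*|y|) - a * ((1 - |y|) * (2 - |y|)^2))
          / (1 - a + a*|y|)^2) (nhds 1) (nhds (-1)) := by
        rw [← hval]; exact (ce2 1 (by norm_num) (by norm_num)).tendsto
      refine Tendsto.congr' ?_ (htend.mono_left nhdsWithin_le_nhds)
      filter_upwards [Ioo_mem_nhdsGT_of_mem (show (1:ℝ) ∈ Ico 1 2 by norm_num)] with x hx
      exact (D31_eq_e2 a hx.1.le hx.2).symm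
  rcases lt_trichotomy s 2 with h2 | h2 | h2
  · -- 1 < s < 2
    have habs : |s| = s := abs_of_nonneg hs
    refine (ce2 s (by rw [habs]; exact h1.le) (by rw [habs]; exact h2.le)).congr ?_
    filter_upwards [isOpen_Ioo.mem_nhds (show s ∈ Ioo (1:ℝ) 2 from ⟨h1, h2⟩)] with x hx
    exact (D31_eq_e2 a hx.1.le hx.2).symm
  · -- s = 2
    subst h2
    rw [← continuousWithinAt_compl_self]
    show Tendsto (D31 a) _ _
    rw [D31_two ha, ← nhdsLT_sup_nhdsGT (2:ℝ), tendsto_sup]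
    constructor
    · have hval : ((-8 + 10*|(2:ℝ)| - 3*(2:ℝ)^2) * (1 - a + a*|(2:ℝ)|) - a * ((1 - |(2:ℝ)|) * (2 - |(2:ℝ)|)^2))
          / (1 - a + a*|(2:ℝ)|)^2 = 0 := by
        rw [show |(2:ℝ)| = 2 by norm_num]; norm_num
      have htend : Tendsto (fun y : ℝ => ((-8 + 10*|y| - 3*y^2) * (1 - a + a*|y|) - a * ((1 - |y|) * (2 - |y|)^2))
          / (1 - a + a*|y|)^2) (nhds 2) (nhds 0) := by
        rw [← hval]; exact (ce2 2 (by norm_num) (by norm_num)).tendsto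
      refine Tendsto.congr' ?_ (htend.mono_left nhdsWithin_le_nhds)
      filter_upwards [Ioo_mem_nhdsLT_of_mem (show (2:ℝ) ∈ Ioc 1 2 by norm_num)] with x hx
      exact (D31_eq_e2 a hx.1.le hx.2).symm
    · refine Tendsto.congr' ?_ (tendsto_const_nhds : Tendsto (fun _ : ℝ => (0:ℝ)) _ _)
      filter_upwards [self_mem_nhdsWithin] with x hx
      exact (D31_eq_zero a (le_of_lt hx)).symm
  · -- 2 < s
    have : ContinuousAt (fun _ : ℝ => (0:ℝ)) s := continuousAt_const
    refine this.congr ?_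
    filter_upwards [isOpen_Ioi.mem_nhds (show s ∈ Ioi (2:ℝ) from h2)] with x hx
    exact (D31_eq_zero a (le_of_lt hx)).symm

theorem S31_C1 (a : ℝ) (ha : -1 < a) :
    ContDiff ℝ 1 (S31 a) ∧
    (∀ c ∈ ({0, 1, 2} : Set ℝ),
      derivWithin (S31 a) (Set.Iic c) c = derivWithin (S31 a) (Set.Ici c) c) ∧
    deriv (S31 a) 1 = -1 := by
  have hd : ∀ t, HasDerivAt (S31 a) (D31 a t) t := S31_hasDerivAt ha
  have hderiv : deriv (S31 a) = D31 a := funext fun t => (hd t).deriv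
  refine ⟨?_, ?_, ?_⟩
  · rw [contDiff_one_iff_deriv]
    exact ⟨fun t => (hd t).differentiableAt, by rw [hderiv]; exact D31_continuous ha⟩
  · intro c _
    rw [(hd c).differentiableAt.derivWithin (uniqueDiffOn_Iic c c self_mem_Iic),
      (hd c).differentiableAt.derivWithin (uniqueDiffOn_Ici c c self_mem_Ici)]
  · rw [hderiv]; exact D31_one ha
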